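/- Let μ ∈ (0, 7/2) and fix a constant K_{1,1} > 0. Then for all M > 0 and J > 0, the infimum of the reduced energy satisfies the scaling relation R_{M,J}^μ = M^{(7−2μ)/3} J^{2(μ+1)/3} R_{1,1}^μ, where R_{M,J}^μ := inf{ E_J^μ(ρ) : ρ ∈ F_M^μ }. -/

import Mathlib

open MeasureTheory Filter Metric
open scoped Topology ENNReal

noncomputable section

/-- Three-dimensional Euclidean space. -/
abbrev E3 := EuclideanSpace ℝ (Fin 3)

/-- Potential energy `E_pot(σ) = -(1/2)∬ σ(x)σ(y)/|x-y| dx dy`. -/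
def Epot (σ : E3 → ℝ) : ℝ :=
  -(1/2) * ∫ p : E3 × E3, σ p.1 * σ p.2 / ‖p.1 - p.2‖

/-- The exponent `p_μ = (2μ+5)/(2μ+3)`. -/
def pExp (μ : ℝ) : ℝ := (2*μ + 5) / (2*μ + 3)

/-- `Ψ(ρ) = ∫ ρ(x)^{p_μ} dx`. -/
def Psi (μ : ℝ) (ρ : E3 → ℝ) : ℝ := ∫ x : E3, ρ x ^ pExp μ

/-- The constraint set `F_M^μ = {ρ ∈ L¹ ∩ L^{p_μ} : ρ ≥ 0 a.e., ∫ρ = M}`. -/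
def FSet (μ M : ℝ) : Set (E3 → ℝ) :=
  {ρ | MemLp ρ 1 volume ∧ MemLp ρ (ENNReal.ofReal (pExp μ)) volume ∧
       0 ≤ᵐ[volume] ρ ∧ ∫ x : E3, ρ x = M}

/-- The reduced energy functional
`E_J^μ(ρ) = K_{1,1} J^{-2(μ+1)/3} Ψ(ρ)^{(2μ+3)/3} + E_pot(ρ)`. -/
def EJ (μ K11 J : ℝ) (ρ : E3 → ℝ) : ℝ :=
  K11 * J ^ (-(2*(μ+1))/3) * Psi μ ρ ^ ((2*μ + 3)/3) + Epot ρ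

/-- `R_{M,J}^μ = inf {E_J^μ(ρ) : ρ ∈ F_M^μ}`. -/
def RMJ (μ K11 M J : ℝ) : ℝ := sInf (EJ μ K11 J '' FSet μ M)

open scoped Pointwise

instance : (volume : Measure (E3 × E3)).IsAddHaarMeasure := by
  rw [Measure.volume_eq_prod]; exact Measure.prod.instIsAddHaarMeasure _ _

lemma finrank_E3 : Module.finrank ℝ E3 = 3 := finrank_euclideanSpace_fin
lemma finrank_E3xE3 : Module.finrank ℝ (E3 × E3) = 6 := by
  rw [Module.finrank_prod, finrank_euclideanSpace_fin]

variable {μ a lam : ℝ} {σ : E3 → ℝ}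

lemma memLp_comp_smul {p : ℝ≥0∞} (hg : MemLp σ p volume) {c : ℝ} (hc : c ≠ 0) :
    MemLp (fun x => σ (c • x)) p volume := by
  have hmap := Measure.map_addHaar_smul (volume : Measure E3) hc
  have he : MeasurableEmbedding (fun x : E3 => c • x) :=
    (Homeomorph.smul (Units.mk0 c hc)).toMeasurableEquiv.measurableEmbedding
  have h2 : MemLp σ p (Measure.map (c • ·) (volume : Measure E3)) := by
    rw [hmap]; exact hg.smul_measure ENNReal.ofReal_ne_top
  exact he.memLp_map_measure_iff.1 h2

lemma ae_nonneg_comp_smul (hσ : 0 ≤ᵐ[volume] σ) {c : ℝ} (hc : c ≠ 0) :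
    0 ≤ᵐ[volume] fun x : E3 => σ (c • x) := by
  have hmap := Measure.map_addHaar_smul (volume : Measure E3) hc
  have he : MeasurableEmbedding (fun x : E3 => c • x) :=
    (Homeomorph.smul (Units.mk0 c hc)).toMeasurableEquiv.measurableEmbedding
  have h2 : ∀ᵐ x ∂(Measure.map (c • ·) (volume : Measure E3)), 0 ≤ σ x := by
    rw [hmap]; exact Measure.ae_smul_measure hσ _
  exact he.ae_map_iff.1 h2

lemma mass_T (hlam : 0 < lam) :
    ∫ x : E3, a * σ (lam⁻¹ • x) = a * lam ^ (3:ℕ) * ∫ x, σ x := by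
  rw [integral_const_mul]
  rw [Measure.integral_comp_inv_smul_of_nonneg (volume : Measure E3) σ hlam.le, finrank_E3,
    smul_eq_mul]
  ring

lemma psi_T (ha : 0 < a) (hlam : 0 < lam) (hσ : 0 ≤ᵐ[volume] σ) :
    Psi μ (fun x => a * σ (lam⁻¹ • x)) = a ^ pExp μ * lam ^ (3:ℕ) * Psi μ σ := by
  unfold Psi
  have h1 := Measure.integral_comp_inv_smul_of_nonneg (volume : Measure E3)
    (fun x => (a * σ x) ^ pExp μ) hlam.le
  rw [finrank_E3, smul_eq_mul] at h1
  rw [h1]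
  have h2 : ∫ x : E3, (a * σ x) ^ pExp μ = a ^ pExp μ * ∫ x, σ x ^ pExp μ := by
    rw [← integral_const_mul]
    refine integral_congr_ae ?_
    filter_upwards [hσ] with x hx
    rw [Real.mul_rpow ha.le hx]
  rw [h2]; ring

lemma epot_T (hlam : 0 < lam) :
    Epot (fun x => a * σ (lam⁻¹ • x)) = a ^ (2:ℕ) * lam ^ (5:ℕ) * Epot σ := by
  unfold Epot
  have key : ∀ q : E3 × E3, (a * σ (lam⁻¹ • q.1)) * (a * σ (lam⁻¹ • q.2)) / ‖q.1 - q.2‖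
      = (a ^ (2:ℕ) * lam⁻¹) * ((fun r : E3 × E3 => σ r.1 * σ r.2 / ‖r.1 - r.2‖) (lam⁻¹ • q)) := by
    intro q
    show _ = (a ^ (2:ℕ) * lam⁻¹) * (σ (lam⁻¹ • q.1) * σ (lam⁻¹ • q.2) / ‖lam⁻¹ • q.1 - lam⁻¹ • q.2‖)
    rw [← smul_sub, norm_smul, Real.norm_eq_abs, abs_of_pos (inv_pos.2 hlam)]
    rw [div_eq_mul_inv, div_eq_mul_inv, mul_inv, inv_inv]
    have hl : lam * lam⁻¹ = 1 := mul_inv_cancel₀ hlam.ne'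
    linear_combination (-(a ^ (2:ℕ)) * σ (lam⁻¹ • q.1) * σ (lam⁻¹ • q.2) * ‖q.1 - q.2‖⁻¹) * hl
  have h1 : (∫ q : E3 × E3, a * σ (lam⁻¹ • q.1) * (a * σ (lam⁻¹ • q.2)) / ‖q.1 - q.2‖)
      = (a ^ (2:ℕ) * lam⁻¹) *
        ∫ q : E3 × E3, (fun r : E3 × E3 => σ r.1 * σ r.2 / ‖r.1 - r.2‖) (lam⁻¹ • q) := by
    rw [← integral_const_mul]
    exact integral_congr_ae (Filter.Eventually.of_forall key)
  have h2 := Measure.integral_comp_inv_smul_of_nonneg (volume : Measure (E3 × E3))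
    (fun r : E3 × E3 => σ r.1 * σ r.2 / ‖r.1 - r.2‖) hlam.le
  rw [finrank_E3xE3, smul_eq_mul] at h2
  rw [h1, h2]
  have hl : lam⁻¹ * lam ^ (6:ℕ) = lam ^ (5:ℕ) := by
    field_simp
  linear_combination (-(1/2) * a ^ (2:ℕ) * (∫ (p : E3 × E3), σ p.1 * σ p.2 / ‖p.1 - p.2‖)) * hl

lemma mem_T {m : ℝ} (ha : 0 < a) (hlam : 0 < lam) (hσ : σ ∈ FSet μ m) :
    (fun x => a * σ (lam⁻¹ • x)) ∈ FSet μ (a * lam ^ (3:ℕ) * m) := by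
  obtain ⟨h1, h2, h3, h4⟩ := hσ
  have hc : (lam⁻¹ : ℝ) ≠ 0 := inv_ne_zero hlam.ne'
  refine ⟨(memLp_comp_smul h1 hc).const_mul a, (memLp_comp_smul h2 hc).const_mul a, ?_, ?_⟩
  · filter_upwards [ae_nonneg_comp_smul h3 hc] with x hx
    exact mul_nonneg ha.le hx
  · rw [mass_T hlam, h4]

lemma P_mul {M J : ℝ} (hM : 0 < M) (hJ : 0 < J) (s t u v : ℝ) :
    (M ^ s * J ^ t) * (M ^ u * J ^ v) = M ^ (s+u) * J ^ (t+v) := by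
  rw [Real.rpow_add hM, Real.rpow_add hJ]; ring

lemma P_rpow {M J : ℝ} (hM : 0 < M) (hJ : 0 < J) (s t u : ℝ) :
    (M ^ s * J ^ t) ^ u = M ^ (s*u) * J ^ (t*u) := by
  rw [Real.mul_rpow (Real.rpow_nonneg hM.le _) (Real.rpow_nonneg hJ.le _),
    ← Real.rpow_mul hM.le, ← Real.rpow_mul hJ.le]

lemma P_pow {M J : ℝ} (hM : 0 < M) (hJ : 0 < J) (s t : ℝ) (n : ℕ) :
    (M ^ s * J ^ t) ^ n = M ^ (s*n) * J ^ (t*n) := by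
  rw [← Real.rpow_natCast (M ^ s * J ^ t) n, P_rpow hM hJ]

lemma EJ_T (K11 J : ℝ) (ha : 0 < a) (hlam : 0 < lam) (hσ : 0 ≤ᵐ[volume] σ) :
    EJ μ K11 J (fun x => a * σ (lam⁻¹ • x)) =
      K11 * J ^ (-(2*(μ+1))/3) * (a ^ pExp μ * lam ^ (3:ℕ)) ^ ((2*μ+3)/3) *
        Psi μ σ ^ ((2*μ+3)/3) + a ^ (2:ℕ) * lam ^ (5:ℕ) * Epot σ := by
  unfold EJ
  rw [psi_T ha hlam hσ, epot_T hlam]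
  have hP : 0 ≤ Psi μ σ := integral_nonneg_of_ae
    (by filter_upwards [hσ] with x hx; exact Real.rpow_nonneg hx _)
  have hal : 0 ≤ a ^ pExp μ * lam ^ (3:ℕ) :=
    mul_nonneg (Real.rpow_nonneg ha.le _) (by positivity)
  rw [Real.mul_rpow hal hP]
  ring

/-- Scaling relation for the infimum of the reduced energy:
`R_{M,J}^μ = M^{(7-2μ)/3} J^{2(μ+1)/3} R_{1,1}^μ`. -/
theorem reduced_infimum_scaling (μ K11 : ℝ) (hμ : 0 < μ) (hμ' : μ < 7/2) (hK : 0 < K11) :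
    ∀ M J : ℝ, 0 < M → 0 < J →
      RMJ μ K11 M J = M ^ ((7 - 2*μ)/3) * J ^ (2*(μ+1)/3) * RMJ μ K11 1 1 := by
  intro M J hM hJ
  set a : ℝ := M ^ (2-2*μ) * J ^ (2*(μ+1)) with ha_def
  set lam : ℝ := M ^ ((2*μ-1)/3) * J ^ (-(2*(μ+1))/3) with hlam_def
  set c : ℝ := M ^ ((7-2*μ)/3) * J ^ (2*(μ+1)/3) with hc_def
  have ha : 0 < a := by positivity
  have hlam : 0 < lam := by positivity
  have hc : 0 < c := by positivity
  have h23 : (2*μ+3) ≠ 0 := by nlinarith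
  have I1 : a * lam ^ (3:ℕ) = M := by
    rw [ha_def, hlam_def, P_pow hM hJ, P_mul hM hJ,
      show ((2-2*μ) + ((2*μ-1)/3)*((3:ℕ):ℝ)) = 1 by push_cast; ring,
      show ((2*(μ+1)) + (-(2*(μ+1))/3)*((3:ℕ):ℝ)) = 0 by push_cast; ring,
      Real.rpow_one, Real.rpow_zero, mul_one]
  have I2 : a ^ (2:ℕ) * lam ^ (5:ℕ) = c := by
    rw [ha_def, hlam_def, hc_def, P_pow hM hJ, P_pow hM hJ, P_mul hM hJ,
      show ((2-2*μ)*((2:ℕ):ℝ) + ((2*μ-1)/3)*((5:ℕ):ℝ)) = (7-2*μ)/3 by push_cast; ring,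
      show ((2*(μ+1))*((2:ℕ):ℝ) + (-(2*(μ+1))/3)*((5:ℕ):ℝ)) = 2*(μ+1)/3 by push_cast; ring]
  have I3 : K11 * J ^ (-(2*(μ+1))/3) * (a ^ pExp μ * lam ^ (3:ℕ)) ^ ((2*μ+3)/3)
      = c * (K11 * (1:ℝ) ^ (-(2*(μ+1))/3)) := by
    rw [Real.one_rpow, mul_one, ha_def, hlam_def, hc_def, P_rpow hM hJ, P_pow hM hJ,
      P_mul hM hJ, P_rpow hM hJ]
    rw [show (J : ℝ) ^ (-(2*(μ+1))/3) = M ^ (0:ℝ) * J ^ (-(2*(μ+1))/3) by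
      rw [Real.rpow_zero, one_mul]]
    rw [mul_assoc, P_mul hM hJ]
    rw [show (0 + ((2-2*μ)*pExp μ + ((2*μ-1)/3)*((3:ℕ):ℝ))*((2*μ+3)/3)) = (7-2*μ)/3 by
        simp only [pExp]; push_cast; field_simp; ring,
      show (-(2*(μ+1))/3 + ((2*(μ+1))*pExp μ + (-(2*(μ+1))/3)*((3:ℕ):ℝ))*((2*μ+3)/3))
          = 2*(μ+1)/3 by
        simp only [pExp]; push_cast; field_simp; ring]
    ring
  have hEJ : ∀ σ : E3 → ℝ, 0 ≤ᵐ[volume] σ →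
      EJ μ K11 J (fun x => a * σ (lam⁻¹ • x)) = c * EJ μ K11 1 σ := by
    intro σ hσ
    rw [EJ_T K11 J ha hlam hσ, I2, mul_assoc (K11 * J ^ (-(2*(μ+1))/3)), ← mul_assoc,
      I3]
    unfold EJ
    ring
  have himg : EJ μ K11 J '' FSet μ M = c • (EJ μ K11 1 '' FSet μ 1) := by
    ext z
    simp only [Set.mem_smul_set, Set.mem_image]
    constructor
    · rintro ⟨ρ, hρ, rfl⟩
      have hσmem := mem_T (μ := μ) (inv_pos.2 ha) (inv_pos.2 hlam) hρ
      simp only [inv_inv] at hσmem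
      set σ : E3 → ℝ := fun x => a⁻¹ * ρ (lam • x) with hσdef
      have hmass : a⁻¹ * (lam⁻¹) ^ (3:ℕ) * M = 1 := by
        rw [← I1]; field_simp
      rw [hmass] at hσmem
      have hρeq : ρ = fun x => a * σ (lam⁻¹ • x) := by
        funext x
        simp only [hσdef, smul_smul, mul_inv_cancel₀ hlam.ne', one_smul]
        field_simp
      refine ⟨EJ μ K11 1 σ, ⟨σ, hσmem, rfl⟩, ?_⟩
      rw [smul_eq_mul, ← hEJ σ hσmem.2.2.1, ← hρeq]
    · rintro ⟨w, ⟨σ, hσ, rfl⟩, rfl⟩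
      refine ⟨fun x => a * σ (lam⁻¹ • x), ?_, ?_⟩
      · have := mem_T (μ := μ) ha hlam hσ
        rwa [mul_one, I1] at this
      · rw [hEJ σ hσ.2.2.1, smul_eq_mul]
  unfold RMJ
  rw [himg, Real.sInf_smul_of_nonneg hc.le, smul_eq_mul, hc_def]
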